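/- arXiv:1210.4253 — 3 statements merged into one kernel-verified Lean document; each statement's English description precedes it below -/
import Mathlib

section
/- Let $n \ge 1$. In the polynomial ring $\mathbb{Z}[X_1,\dots,X_n]$, the coefficient of the monomial $X_1^{n-1} X_2^{n-1} \cdots X_n^{n-1}$ in the polynomial $\prod_{i \neq j} (X_i - X_j)$ (product over all ordered pairs $(i,j)$ with $i \neq j$) equals $n!$. -/
open MvPolynomial Finset Equiv Matrix

private noncomputable def eExp {n : ℕ} (σ : Equiv.Perm (Fin n)) : (Fin n) →₀ ℕ :=
  ∑ i : Fin n, Finsupp.single (σ i) (i : ℕ)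

private lemma eExp_apply {n : ℕ} (σ : Equiv.Perm (Fin n)) (k : Fin n) :
    eExp σ k = ((σ.symm k : Fin n) : ℕ) := by
  rw [eExp, Finsupp.finset_sum_apply]
  rw [Fintype.sum_eq_single (σ.symm k) (fun i hi => Finsupp.single_eq_of_ne' (by
    simpa [Equiv.eq_symm_apply] using hi))]
  simp

private lemma prod_X_pow_eq {n : ℕ} (σ : Equiv.Perm (Fin n)) :
    (∏ i : Fin n, (X (σ i) : MvPolynomial (Fin n) ℤ) ^ (i : ℕ)) = monomial (eExp σ) 1 := by
  rw [eExp]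
  simp_rw [X_pow_eq_monomial]
  rw [monomial_sum_one]

private lemma fin_add_rev {n : ℕ} (a b : Fin n) : (a : ℕ) + (b : ℕ) = n - 1 ↔ b = a.rev := by
  rw [Fin.ext_iff, Fin.val_rev]
  omega

private lemma revPerm_mul_revPerm {n : ℕ} : (Fin.revPerm : Equiv.Perm (Fin n)) * Fin.revPerm = 1 := by
  ext x; simp

private lemma cond_iff {n : ℕ} (σ τ : Equiv.Perm (Fin n)) :
    eExp σ + eExp (Fin.revPerm * τ) = (Finsupp.equivFunOnFinite.symm fun _ : Fin n => n - 1)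
      ↔ τ = Fin.revPerm * σ * Fin.revPerm := by
  constructor
  · intro h
    have hk : ∀ k : Fin n, τ.symm (Fin.rev k) = (σ.symm k).rev := by
      intro k
      have := DFunLike.congr_fun h k
      rw [Finsupp.add_apply, eExp_apply, eExp_apply] at this
      have h2 : ((Fin.revPerm * τ : Equiv.Perm (Fin n)).symm k) = τ.symm (Fin.rev k) := by
        simp [Equiv.Perm.mul_def]
      rw [h2] at this
      simp only [Finsupp.coe_equivFunOnFinite_symm] at this
      exact (fin_add_rev _ _).mp this
    apply Equiv.ext
    intro y
    have h0 := hk (σ (Fin.rev y))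
    simp only [Equiv.symm_apply_apply, Fin.rev_rev] at h0
    have h3 : τ y = (σ y.rev).rev := by
      conv_lhs => rw [← h0]
      rw [Equiv.apply_symm_apply]
    simp only [Equiv.Perm.mul_apply, Fin.revPerm_apply]
    exact h3
  · rintro rfl
    ext k
    rw [Finsupp.add_apply, eExp_apply, eExp_apply]
    have h1 : Fin.revPerm * (Fin.revPerm * σ * Fin.revPerm) = σ * Fin.revPerm := by
      rw [← mul_assoc, ← mul_assoc, revPerm_mul_revPerm, one_mul]
    rw [h1]
    have h2 : ((σ * Fin.revPerm : Equiv.Perm (Fin n)).symm k) = (σ.symm k).rev := by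
      simp [Equiv.Perm.mul_def]
    rw [h2]
    simp only [Finsupp.coe_equivFunOnFinite_symm]
    exact (fin_add_rev _ _).mpr rfl

private lemma prod_split (n : ℕ) :
    (∏ p ∈ Finset.univ.filter (fun p : Fin n × Fin n => p.1 ≠ p.2),
        (MvPolynomial.X p.1 - MvPolynomial.X p.2) : MvPolynomial (Fin n) ℤ)
    = det (vandermonde (fun i => (X i : MvPolynomial (Fin n) ℤ)))
      * det (vandermonde (fun i => (X (Fin.rev i) : MvPolynomial (Fin n) ℤ))) := by
  have hsplit : Finset.univ.filter (fun p : Fin n × Fin n => p.1 ≠ p.2)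
      = Finset.univ.filter (fun p : Fin n × Fin n => p.2 < p.1)
        ∪ Finset.univ.filter (fun p : Fin n × Fin n => p.1 < p.2) := by
    ext p
    simp only [mem_filter, mem_union, Finset.mem_univ, true_and]
    constructor
    · exact fun h => (lt_or_gt_of_ne h).symm
    · rintro (h | h)
      · exact (ne_of_lt h).symm
      · exact ne_of_lt h
  rw [hsplit, Finset.prod_union (by
    simp only [Finset.disjoint_left, mem_filter]; rintro p ⟨-, h1⟩ ⟨-, h2⟩; exact absurd (h1.trans h2) (lt_irrefl _))]
  rw [det_vandermonde, det_vandermonde]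
  congr 1
  · rw [Finset.prod_finset_product_right' (r := Finset.univ.filter (fun p : Fin n × Fin n => p.2 < p.1))
        (s := univ) (t := fun i => Ioi i) (f := fun a c => (X a - X c : MvPolynomial (Fin n) ℤ))
        (by simp)]
  · rw [Finset.prod_finset_product' (r := Finset.univ.filter (fun p : Fin n × Fin n => p.1 < p.2))
        (s := univ) (t := fun i => Ioi i) (f := fun a c => (X a - X c : MvPolynomial (Fin n) ℤ))
        (by simp)]
    rw [prod_sigma', prod_sigma']
    refine Finset.prod_nbij' (fun p => ⟨Fin.rev p.2, Fin.rev p.1⟩) (fun p => ⟨Fin.rev p.2, Fin.rev p.1⟩)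
      ?_ ?_ ?_ ?_ ?_ <;> simp [Fin.rev_lt_rev]

/-- The coefficient of `X₁^(n-1) ⋯ Xₙ^(n-1)` in `∏_{i ≠ j} (Xᵢ - Xⱼ)` equals `n!`. -/
theorem coeff_prod_sub_eq_factorial (n : ℕ) (hn : 1 ≤ n) :
    MvPolynomial.coeff (Finsupp.equivFunOnFinite.symm fun _ : Fin n => n - 1)
      (∏ p ∈ Finset.univ.filter (fun p : Fin n × Fin n => p.1 ≠ p.2),
        (MvPolynomial.X p.1 - MvPolynomial.X p.2) : MvPolynomial (Fin n) ℤ)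
      = (n.factorial : ℤ) := by
  rw [prod_split n, Matrix.det_apply', Matrix.det_apply', Finset.sum_mul_sum]
  rw [MvPolynomial.coeff_sum]
  have hterm : ∀ σ τ : Equiv.Perm (Fin n),
      ((Equiv.Perm.sign σ : ℤ) : MvPolynomial (Fin n) ℤ) * (∏ i, vandermonde (fun i => (X i : MvPolynomial (Fin n) ℤ)) (σ i) i)
        * (((Equiv.Perm.sign τ : ℤ) : MvPolynomial (Fin n) ℤ) * (∏ i, vandermonde (fun i => (X (Fin.rev i) : MvPolynomial (Fin n) ℤ)) (τ i) i))
      = C ((Equiv.Perm.sign σ : ℤ) * (Equiv.Perm.sign τ : ℤ)) * monomial (eExp σ + eExp (Fin.revPerm * τ)) 1 := by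
    intro σ τ
    have h1 : (∏ i, vandermonde (fun i => (X i : MvPolynomial (Fin n) ℤ)) (σ i) i) = monomial (eExp σ) 1 := by
      simp_rw [vandermonde_apply]; exact prod_X_pow_eq σ
    have h2 : (∏ i, vandermonde (fun i => (X (Fin.rev i) : MvPolynomial (Fin n) ℤ)) (τ i) i)
        = monomial (eExp (Fin.revPerm * τ)) 1 := by
      simp_rw [vandermonde_apply]
      have := prod_X_pow_eq (Fin.revPerm * τ)
      simpa [Equiv.Perm.mul_apply] using this
    rw [h1, h2]
    rw [show (((Equiv.Perm.sign σ : ℤ) : MvPolynomial (Fin n) ℤ)) = C ((Equiv.Perm.sign σ : ℤ)) by simp,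
       show (((Equiv.Perm.sign τ : ℤ) : MvPolynomial (Fin n) ℤ)) = C ((Equiv.Perm.sign τ : ℤ)) by simp]
    rw [mul_mul_mul_comm, ← _root_.map_mul, monomial_mul, mul_one]
  simp_rw [hterm]
  have hcoeff : ∀ σ τ : Equiv.Perm (Fin n),
      MvPolynomial.coeff (Finsupp.equivFunOnFinite.symm fun _ : Fin n => n - 1)
        (C ((Equiv.Perm.sign σ : ℤ) * (Equiv.Perm.sign τ : ℤ)) * monomial (eExp σ + eExp (Fin.revPerm * τ)) 1)
      = if τ = Fin.revPerm * σ * Fin.revPerm then ((Equiv.Perm.sign σ : ℤ) * (Equiv.Perm.sign τ : ℤ)) else 0 := by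
    intro σ τ
    rw [MvPolynomial.coeff_C_mul, MvPolynomial.coeff_monomial]
    rw [if_congr (cond_iff σ τ) rfl rfl]
    split <;> simp
  simp_rw [MvPolynomial.coeff_sum, hcoeff]
  calc (∑ σ : Equiv.Perm (Fin n), ∑ τ : Equiv.Perm (Fin n),
        if τ = Fin.revPerm * σ * Fin.revPerm then ((Equiv.Perm.sign σ : ℤ) * (Equiv.Perm.sign τ : ℤ)) else 0)
      = ∑ _σ : Equiv.Perm (Fin n), (1:ℤ) := by
        refine Finset.sum_congr rfl fun σ _ => ?_
        rw [Finset.sum_ite_eq' Finset.univ (Fin.revPerm * σ * Fin.revPerm)]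
        rw [if_pos (Finset.mem_univ _), Equiv.Perm.sign_mul, Equiv.Perm.sign_mul]
        rcases Int.units_eq_one_or (Equiv.Perm.sign σ) with h | h <;>
          rcases Int.units_eq_one_or (Equiv.Perm.sign (Fin.revPerm : Equiv.Perm (Fin n))) with h2 | h2 <;>
          simp [h, h2]
    _ = (n.factorial : ℤ) := by
        simp [Finset.card_univ, Fintype.card_perm]
end

section
/- Let $n \ge 1$. In $\mathbb{Z}[X_1,\dots,X_n]$, the polynomial $\prod_{i \neq j} (X_i - X_j) \;-\; n! \cdot \prod_{i=1}^n X_i^{\,n-1}$ (the first product over all ordered pairs $(i,j)$ with $i \neq j$) lies in the ideal generated by $X_1^n, X_2^n, \dots, X_n^n$. Equivalently, in the quotient ring $\mathbb{Z}[X_1,\dots,X_n]/(X_1^n,\dots,X_n^n)$ the image of $\prod_{i\neq j}(X_i - X_j)$ equals $n!$ times the image of $\prod_i X_i^{n-1}$. -/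
open Finset Equiv

private lemma aux_prod_filter_lt {M : Type*} [CommMonoid M] {n : ℕ} (f : Fin n → Fin n → M) :
    (∏ p ∈ Finset.univ.filter (fun p : Fin n × Fin n => p.1 < p.2), f p.1 p.2)
      = ∏ i : Fin n, ∏ j ∈ Finset.Ioi i, f i j := by
  rw [Finset.prod_filter, Fintype.prod_prod_type]
  refine Finset.prod_congr rfl fun i _ => ?_
  rw [← Finset.filter_lt_eq_Ioi, Finset.prod_filter]

private lemma aux_rev {R : Type*} [CommRing R] {n : ℕ} (x : Fin n → R) :
    (∏ p ∈ Finset.univ.filter (fun p : Fin n × Fin n => p.1 < p.2), (x p.2.rev - x p.1.rev))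
      = ∏ p ∈ Finset.univ.filter (fun p : Fin n × Fin n => p.1 < p.2), (x p.1 - x p.2) := by
  refine Finset.prod_bij' (fun p _ => (p.2.rev, p.1.rev)) (fun p _ => (p.2.rev, p.1.rev))
    ?_ ?_ ?_ ?_ ?_ <;> simp [Fin.rev_lt_rev, Fin.rev_rev]

private lemma aux_split {R : Type*} [CommRing R] {n : ℕ} (x : Fin n → R) :
    (∏ p ∈ Finset.univ.filter (fun p : Fin n × Fin n => p.1 ≠ p.2), (x p.1 - x p.2))
      = (∏ i : Fin n, ∏ j ∈ Finset.Ioi i, (x i - x j))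
        * (∏ i : Fin n, ∏ j ∈ Finset.Ioi i, (x j - x i)) := by
  rw [Finset.prod_filter, Fintype.prod_prod_type]
  have key : ∀ i j : Fin n, (if i ≠ j then x i - x j else 1)
      = (if i < j then x i - x j else 1) * (if j < i then x i - x j else 1) := by
    intro i j
    rcases lt_trichotomy i j with h | h | h
    · simp [h, not_lt.mpr h.le, h.ne]
    · simp [h]
    · simp [h, not_lt.mpr h.le, h.ne']
  simp_rw [key, Finset.prod_mul_distrib]
  congr 1
  · rw [← aux_prod_filter_lt fun i j => x i - x j, Finset.prod_filter, Fintype.prod_prod_type]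
  · rw [Finset.prod_comm, ← aux_prod_filter_lt fun i j => x j - x i, Finset.prod_filter,
      Fintype.prod_prod_type]

private lemma aux_bound {n : ℕ} (a b : Equiv.Perm (Fin n))
    (h : ∀ k, ((a k : ℕ) + (b k : ℕ)) ≤ n - 1) (k : Fin n) :
    (a k : ℕ) + (b k : ℕ) = n - 1 := by
  by_contra hne
  have hk : (a k : ℕ) + (b k : ℕ) < n - 1 := lt_of_le_of_ne (h k) hne
  have h1 : ∑ j : Fin n, ((a j : ℕ) + (b j : ℕ)) < ∑ _j : Fin n, (n - 1) :=
    Finset.sum_lt_sum (fun j _ => h j) ⟨k, Finset.mem_univ k, hk⟩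
  have h2 : ∑ j : Fin n, ((a j : ℕ) + (b j : ℕ)) = n * (n - 1) := by
    rw [Finset.sum_add_distrib, Equiv.sum_comp a (fun j : Fin n => (j : ℕ)),
      Equiv.sum_comp b (fun j : Fin n => (j : ℕ)), ← two_mul,
      Fin.sum_univ_eq_sum_range (fun j => j) n, mul_comm,
      Finset.sum_range_id_mul_two]
  have h3 : ∑ _j : Fin n, (n - 1) = n * (n - 1) := by
    simp [Finset.sum_const, Finset.card_univ, mul_comm]
  omega

private lemma aux_vanish {R : Type*} [CommRing R] {n : ℕ} (x : Fin n → R)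
    (hx : ∀ i, x i ^ n = 0) (a : Fin n → ℕ) (k : Fin n) (hk : n ≤ a k) :
    ∏ i : Fin n, x i ^ a i = 0 := by
  apply Finset.prod_eq_zero (Finset.mem_univ k)
  rw [← Nat.add_sub_cancel' hk, pow_add, hx, zero_mul]

private lemma aux_reindex {R : Type*} [CommRing R] {n : ℕ} (x : Fin n → R)
    (ρ : Equiv.Perm (Fin n)) :
    ∏ i : Fin n, x (ρ i) ^ (i : ℕ) = ∏ k : Fin n, x k ^ ((ρ⁻¹ k : Fin n) : ℕ) := by
  conv_rhs => rw [← Equiv.prod_comp ρ (fun k => x k ^ ((ρ⁻¹ k : Fin n) : ℕ))]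
  simp

private lemma aux_inner {R : Type*} [CommRing R] {n : ℕ} (x : Fin n → R)
    (hx : ∀ i, x i ^ n = 0) (σ : Equiv.Perm (Fin n)) :
    (∑ τ : Equiv.Perm (Fin n),
      (((Equiv.Perm.sign σ : ℤ) : R) * ∏ i : Fin n, x (σ i).rev ^ (i : ℕ))
        * (((Equiv.Perm.sign τ : ℤ) : R) * ∏ i : Fin n, x (τ i) ^ (i : ℕ)))
    = ∏ i : Fin n, x i ^ (n - 1) := by
  classical
  set ρ : Equiv.Perm (Fin n) := Fin.revPerm * σ with hρ
  have hρapp : ∀ i, (σ i).rev = ρ i := fun i => rfl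
  set τ₀ : Equiv.Perm (Fin n) := ρ * Fin.revPerm with hτ₀
  have hrel : ∀ k, τ₀⁻¹ k = (ρ⁻¹ k).rev := by
    intro k
    rw [hτ₀, mul_inv_rev, Equiv.Perm.mul_apply]
    rfl
  have hPQ : ∀ τ : Equiv.Perm (Fin n),
      (∏ i : Fin n, x (σ i).rev ^ (i : ℕ)) * (∏ i : Fin n, x (τ i) ^ (i : ℕ))
        = ∏ k : Fin n, x k ^ (((ρ⁻¹ k : Fin n) : ℕ) + ((τ⁻¹ k : Fin n) : ℕ)) := by
    intro τ
    simp_rw [hρapp]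
    rw [aux_reindex x ρ, aux_reindex x τ, ← Finset.prod_mul_distrib]
    simp_rw [← pow_add]
  rw [Finset.sum_eq_single τ₀]
  · -- value at the surviving permutation
    have hsign : Equiv.Perm.sign τ₀ = Equiv.Perm.sign σ := by
      rw [hτ₀, hρ, Equiv.Perm.sign_mul, Equiv.Perm.sign_mul,
        mul_comm (Equiv.Perm.sign (Fin.revPerm : Equiv.Perm (Fin n))) (Equiv.Perm.sign σ),
        mul_assoc, Int.units_mul_self, mul_one]
    rw [mul_mul_mul_comm, hPQ, hsign]
    have hexp : ∀ k : Fin n,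
        ((ρ⁻¹ k : Fin n) : ℕ) + ((τ₀⁻¹ k : Fin n) : ℕ) = n - 1 := by
      intro k
      have hlt : ((ρ⁻¹ k : Fin n) : ℕ) < n := Fin.is_lt _
      rw [hrel, Fin.val_rev]
      omega
    simp_rw [hexp]
    have hs : ((Equiv.Perm.sign σ : ℤ) : R) * ((Equiv.Perm.sign σ : ℤ) : R) = 1 := by
      rw [← Int.cast_mul, ← Units.val_mul, Int.units_mul_self, Units.val_one, Int.cast_one]
    rw [hs, one_mul]
  · -- other permutations contribute 0
    intro τ _ hτ
    rw [mul_mul_mul_comm, hPQ]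
    have hex : ∃ k : Fin n, n ≤ ((ρ⁻¹ k : Fin n) : ℕ) + ((τ⁻¹ k : Fin n) : ℕ) := by
      by_contra hcon
      push_neg at hcon
      have hle : ∀ k : Fin n, ((ρ⁻¹ k : Fin n) : ℕ) + ((τ⁻¹ k : Fin n) : ℕ) ≤ n - 1 := by
        intro k
        have := hcon k
        omega
      have heq := aux_bound ρ⁻¹ τ⁻¹ hle
      apply hτ
      have hinv : τ⁻¹ = τ₀⁻¹ := by
        ext k
        have h1 := heq k
        have hlt : ((ρ⁻¹ k : Fin n) : ℕ) < n := Fin.is_lt _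
        rw [hrel, Fin.val_rev]
        omega
      exact inv_injective hinv
    obtain ⟨k, hk⟩ := hex
    rw [aux_vanish x hx _ k hk, mul_zero]
  · intro h
    exact absurd (Finset.mem_univ _) h

private lemma aux_key {R : Type*} [CommRing R] {n : ℕ} (x : Fin n → R)
    (hx : ∀ i, x i ^ n = 0) :
    (∏ p ∈ Finset.univ.filter (fun p : Fin n × Fin n => p.1 ≠ p.2), (x p.1 - x p.2))
      = (n.factorial : R) * ∏ i : Fin n, x i ^ (n - 1) := by
  classical
  have hW : (∏ i : Fin n, ∏ j ∈ Finset.Ioi i, (x i - x j))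
      = Matrix.det (Matrix.vandermonde fun i : Fin n => x i.rev) := by
    rw [Matrix.det_vandermonde, ← aux_prod_filter_lt fun i j => x i - x j,
      ← aux_prod_filter_lt fun i j : Fin n => x j.rev - x i.rev]
    exact (aux_rev x).symm
  have hV : (∏ i : Fin n, ∏ j ∈ Finset.Ioi i, (x j - x i)) = Matrix.det (Matrix.vandermonde x) :=
    (Matrix.det_vandermonde x).symm
  rw [aux_split, hW, hV, Matrix.det_apply', Matrix.det_apply', Finset.sum_mul_sum]
  simp only [Matrix.vandermonde_apply]
  calc (∑ σ : Equiv.Perm (Fin n), ∑ τ : Equiv.Perm (Fin n),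
        (((Equiv.Perm.sign σ : ℤ) : R) * ∏ i : Fin n, x (σ i).rev ^ (i : ℕ))
          * (((Equiv.Perm.sign τ : ℤ) : R) * ∏ i : Fin n, x (τ i) ^ (i : ℕ)))
      = ∑ _σ : Equiv.Perm (Fin n), ∏ i : Fin n, x i ^ (n - 1) :=
        Finset.sum_congr rfl fun σ _ => aux_inner x hx σ
    _ = (n.factorial : R) * ∏ i : Fin n, x i ^ (n - 1) := by
        rw [Finset.sum_const, Finset.card_univ, Fintype.card_perm, Fintype.card_fin,
          nsmul_eq_mul]

/-- In `ℤ[X₁,…,Xₙ]`, the polynomial `∏_{i ≠ j} (Xᵢ - Xⱼ) - n! ⋅ ∏ᵢ Xᵢ^(n-1)` lies in the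
ideal generated by `X₁^n, …, Xₙ^n`. -/
theorem prod_sub_sub_factorial_mem_ideal (n : ℕ) (hn : 1 ≤ n) :
    ((∏ p ∈ Finset.univ.filter (fun p : Fin n × Fin n => p.1 ≠ p.2),
        (MvPolynomial.X p.1 - MvPolynomial.X p.2) : MvPolynomial (Fin n) ℤ)
      - (n.factorial : MvPolynomial (Fin n) ℤ) * ∏ i : Fin n, MvPolynomial.X i ^ (n - 1))
      ∈ Ideal.span (Set.range fun i : Fin n => (MvPolynomial.X i : MvPolynomial (Fin n) ℤ) ^ n) := by
  rw [← Ideal.Quotient.eq]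
  have hx : ∀ i : Fin n,
      (Ideal.Quotient.mk (Ideal.span (Set.range fun i : Fin n =>
        (MvPolynomial.X i : MvPolynomial (Fin n) ℤ) ^ n)) (MvPolynomial.X i)) ^ n = 0 := by
    intro i
    rw [← map_pow, Ideal.Quotient.eq_zero_iff_mem]
    exact Ideal.subset_span ⟨i, rfl⟩
  simp only [map_prod, map_sub, map_mul, map_pow, map_natCast]
  exact aux_key _ hx
end

section
/- Let $n \ge 1$ and let $V(X)$ be the $n \times n$ Vandermonde matrix over $\mathbb{Z}[X_1,\dots,X_n]$ with $(i,j)$ entry $X_i^{\,j}$, $0 \le j \le n-1$. Then $\big(\det V(X)\big)^2 \;-\; (-1)^{n(n-1)/2}\, n! \cdot \prod_{i=1}^n X_i^{\,n-1}$ lies in the ideal of $\mathbb{Z}[X_1,\dots,X_n]$ generated by $X_1^n,\dots,X_n^n$. -/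
open Finset Equiv MvPolynomial

private lemma aux_card (n : ℕ) : ∑ i : Fin n, (i : ℕ) = n * (n-1) / 2 := by
  rw [Fin.sum_univ_eq_sum_range (fun i => i) n, Finset.sum_range_id]

private lemma aux_two_mul (n : ℕ) : (∑ i : Fin n, (i : ℕ)) + ∑ i : Fin n, (i : ℕ) = n * (n-1) := by
  rw [Fin.sum_univ_eq_sum_range (fun i => i) n, ← two_mul, mul_comm,
    Finset.sum_range_id_mul_two]

private lemma aux_card' (n : ℕ) : ∑ i : Fin n, (n - 1 - (i : ℕ)) = n * (n-1) / 2 := by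
  rw [Fin.sum_univ_eq_sum_range (fun i => n - 1 - i) n, Finset.sum_range_reflect (fun i => i) n,
    Finset.sum_range_id]

private lemma sign_revPerm (n : ℕ) :
    Equiv.Perm.sign (Fin.revPerm : Equiv.Perm (Fin n)) = (-1) ^ (n * (n-1) / 2) := by
  have hinj : Function.Injective (fun i : Fin n => ((i : ℕ) : ℤ)) := by
    intro a b h
    simp only at h
    exact Fin.ext (by exact_mod_cast h)
  have hne : (Matrix.vandermonde fun i : Fin n => ((i : ℕ) : ℤ)).det ≠ 0 :=
    Matrix.det_vandermonde_ne_zero_iff.2 hinj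
  have h1 : (Matrix.vandermonde fun i : Fin n => ((i.rev : ℕ) : ℤ)).det
      = ((Equiv.Perm.sign (Fin.revPerm : Equiv.Perm (Fin n)) : ℤ))
        * (Matrix.vandermonde fun i : Fin n => ((i : ℕ) : ℤ)).det := by
    have h : (Matrix.vandermonde fun i : Fin n => ((i.rev : ℕ) : ℤ))
        = (Matrix.vandermonde fun i : Fin n => ((i : ℕ) : ℤ)).submatrix Fin.revPerm id := by
      ext i j; simp [Matrix.vandermonde, Matrix.submatrix]
    rw [h, Matrix.det_permute]; norm_cast
  have h2 : (Matrix.vandermonde fun i : Fin n => ((i.rev : ℕ) : ℤ)).det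
      = (-1 : ℤ) ^ (n * (n-1) / 2) * (Matrix.vandermonde fun i : Fin n => ((i : ℕ) : ℤ)).det := by
    rw [Matrix.det_vandermonde, Matrix.det_vandermonde]
    have key : (∏ i : Fin n, ∏ j ∈ Ioi i, (((j.rev : ℕ) : ℤ) - ((i.rev : ℕ) : ℤ)))
        = ∏ i : Fin n, ∏ j ∈ Ioi i, (((i : ℕ) : ℤ) - ((j : ℕ) : ℤ)) := by
      rw [Finset.prod_sigma', Finset.prod_sigma']
      refine Finset.prod_nbij' (fun p => ⟨p.2.rev, p.1.rev⟩) (fun p => ⟨p.2.rev, p.1.rev⟩)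
        ?_ ?_ ?_ ?_ ?_ <;>
        simp only [Finset.mem_sigma, Finset.mem_univ, Finset.mem_Ioi, true_and, Fin.rev_lt_rev,
          Fin.rev_rev, and_imp, Sigma.forall, implies_true, forall_const] <;>
      all_goals exact fun a b h => h
    rw [key]
    calc ∏ i : Fin n, ∏ j ∈ Ioi i, (((i:ℕ):ℤ) - ((j:ℕ):ℤ))
        = ∏ i : Fin n, ∏ j ∈ Ioi i, (-1) * (((j:ℕ):ℤ) - ((i:ℕ):ℤ)) := by
          exact Finset.prod_congr rfl fun i _ => Finset.prod_congr rfl fun j hj => by ring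
      _ = (-1 : ℤ) ^ (n * (n-1)/2) * ∏ i : Fin n, ∏ j ∈ Ioi i, (((j:ℕ):ℤ) - ((i:ℕ):ℤ)) := by
          simp_rw [Finset.prod_mul_distrib, Finset.prod_const]
          rw [Finset.prod_pow_eq_pow_sum]
          congr 1
          rw [← aux_card' n]
          congr 1
          exact Finset.sum_congr rfl fun i _ => Fin.card_Ioi i
  have h3 := h1.symm.trans h2
  have hz : ((Equiv.Perm.sign (Fin.revPerm : Equiv.Perm (Fin n)) : ℤ)) = (-1:ℤ) ^ (n*(n-1)/2) :=
    mul_right_cancel₀ hne h3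
  exact Units.ext (by push_cast; exact hz)



/-- The square of the Vandermonde determinant is congruent to
`(-1)^(n(n-1)/2) ⋅ n! ⋅ ∏ᵢ Xᵢ^(n-1)` modulo the ideal `(X₁^n, …, Xₙ^n)` of `ℤ[X₁,…,Xₙ]`. -/
theorem det_vandermonde_sq_sub_mem_ideal (n : ℕ) (hn : 1 ≤ n) :
    ((Matrix.vandermonde fun i : Fin n => (MvPolynomial.X i : MvPolynomial (Fin n) ℤ)).det ^ 2
      - (-1 : MvPolynomial (Fin n) ℤ) ^ (n * (n - 1) / 2) * (n.factorial : MvPolynomial (Fin n) ℤ)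
          * ∏ i : Fin n, MvPolynomial.X i ^ (n - 1))
      ∈ Ideal.span (Set.range fun i : Fin n => (MvPolynomial.X i : MvPolynomial (Fin n) ℤ) ^ n) := by
  classical
  set R := MvPolynomial (Fin n) ℤ with hR
  set I := Ideal.span (Set.range fun i : Fin n => (MvPolynomial.X i : R) ^ n) with hI
  have hmem : ∀ f : Fin n → ℕ, (∃ j, n ≤ f j) → (∏ i, (X i : R) ^ f i) ∈ I := by
    rintro f ⟨j, hj⟩
    have hdvd : (X j : R) ^ n ∣ ∏ i, (X i : R) ^ f i :=
      dvd_trans (pow_dvd_pow _ hj) (Finset.dvd_prod_of_mem _ (Finset.mem_univ j))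
    obtain ⟨c, hc⟩ := hdvd
    rw [hc, mul_comm]
    exact Ideal.mul_mem_left _ _ (Ideal.subset_span ⟨j, rfl⟩)
  -- determinant as a sum over permutations, with columns indexed by σ
  have hD : (Matrix.vandermonde fun i : Fin n => (X i : R)).det
      = ∑ σ : Perm (Fin n), ((Perm.sign σ : ℤ) : R) * ∏ i, (X i : R) ^ ((σ i : ℕ)) := by
    rw [← Matrix.det_transpose, Matrix.det_apply']
    exact Finset.sum_congr rfl fun σ _ => rfl
  set f : Perm (Fin n) → Perm (Fin n) → R := fun σ τ =>
    (((Perm.sign σ : ℤ) * (Perm.sign τ : ℤ) : ℤ) : R) * ∏ i, (X i : R) ^ ((σ i : ℕ) + (τ i : ℕ))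
    with hf
  have hsq : (Matrix.vandermonde fun i : Fin n => (X i : R)).det ^ 2
      = ∑ σ : Perm (Fin n), ∑ τ : Perm (Fin n), f σ τ := by
    rw [sq, hD, Finset.sum_mul_sum]
    refine Finset.sum_congr rfl fun σ _ => Finset.sum_congr rfl fun τ _ => ?_
    rw [hf]
    push_cast
    rw [mul_mul_mul_comm, ← Finset.prod_mul_distrib]
    congr 1
    exact Finset.prod_congr rfl fun i _ => (pow_add _ _ _).symm
  -- the matched diagonal terms
  have hmul : ∀ (σ : Perm (Fin n)) (j : Fin n),
      ((Fin.revPerm * σ : Perm (Fin n)) j : ℕ) = n - 1 - (σ j : ℕ) := by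
    intro σ j
    simp only [Equiv.Perm.mul_apply, Fin.revPerm_apply, Fin.val_rev]
    omega
  have hmatch : ∀ σ : Perm (Fin n), f σ (Fin.revPerm * σ)
      = (-1 : R) ^ (n * (n - 1) / 2) * ∏ i : Fin n, (X i : R) ^ (n - 1) := by
    intro σ
    have hsign : (Perm.sign σ : ℤ) * (Perm.sign (Fin.revPerm * σ) : ℤ)
        = (-1 : ℤ) ^ (n * (n-1) / 2) := by
      have hrev : Perm.sign (Fin.revPerm : Perm (Fin n)) = (-1) ^ (n * (n-1) / 2) :=
        sign_revPerm n
      rw [map_mul, hrev]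
      push_cast
      rcases Int.units_eq_one_or (Perm.sign σ) with h | h <;> rw [h] <;> push_cast <;> ring
    have hexp : ∀ i : Fin n, (σ i : ℕ) + (((Fin.revPerm * σ : Perm (Fin n)) i) : ℕ) = n - 1 := by
      intro i
      have h1 := hmul σ i
      have h2 : (σ i : ℕ) < n := (σ i).is_lt
      omega
    have hprod : (∏ i, (X i : R) ^ ((σ i : ℕ) + (((Fin.revPerm * σ : Perm (Fin n)) i) : ℕ)))
        = ∏ i : Fin n, (X i : R) ^ (n - 1) :=
      Finset.prod_congr rfl fun i _ => by rw [hexp i]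
    rw [hf]
    simp only [hprod, hsign]
    push_cast
    ring
  have hA : ∑ σ : Perm (Fin n), f σ (Fin.revPerm * σ)
      = (-1 : R) ^ (n * (n - 1) / 2) * (n.factorial : R) * ∏ i : Fin n, (X i : R) ^ (n - 1) := by
    rw [Finset.sum_congr rfl fun σ _ => hmatch σ, Finset.sum_const, Finset.card_univ,
      Fintype.card_perm, Fintype.card_fin, nsmul_eq_mul]
    ring
  -- the off-diagonal terms lie in the ideal
  have hB : ∀ σ : Perm (Fin n), ∀ τ ∈ Finset.univ.erase (Fin.revPerm * σ), f σ τ ∈ I := by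
    intro σ τ hτ
    have hne : τ ≠ Fin.revPerm * σ := Finset.ne_of_mem_erase hτ
    have hex : ∃ j, n ≤ (σ j : ℕ) + (τ j : ℕ) := by
      by_contra hcon
      push_neg at hcon
      have hsum : ∑ j : Fin n, ((σ j : ℕ) + (τ j : ℕ)) = ∑ _j : Fin n, (n - 1) := by
        rw [Finset.sum_add_distrib, Equiv.sum_comp σ (fun i : Fin n => (i : ℕ)),
          Equiv.sum_comp τ (fun i : Fin n => (i : ℕ)), aux_two_mul n, Finset.sum_const,
          Finset.card_univ, Fintype.card_fin, smul_eq_mul]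
      have hle : ∀ j ∈ Finset.univ, (σ j : ℕ) + (τ j : ℕ) ≤ n - 1 := fun j _ => by
        have := hcon j; omega
      have hall := (Finset.sum_eq_sum_iff_of_le hle).1 hsum
      apply hne
      ext j
      have h1 := hall j (Finset.mem_univ j)
      have h2 := hmul σ j
      have h3 : (σ j : ℕ) < n := (σ j).is_lt
      have h4 : (τ j : ℕ) < n := (τ j).is_lt
      omega
    exact Ideal.mul_mem_left _ _ (hmem _ hex)
  have hsplit : (Matrix.vandermonde fun i : Fin n => (X i : R)).det ^ 2
      = ((-1 : R) ^ (n * (n - 1) / 2) * (n.factorial : R) * ∏ i : Fin n, (X i : R) ^ (n - 1))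
        + ∑ σ : Perm (Fin n), ∑ τ ∈ Finset.univ.erase (Fin.revPerm * σ), f σ τ := by
    rw [hsq, ← hA, ← Finset.sum_add_distrib]
    exact Finset.sum_congr rfl fun σ _ =>
      (Finset.add_sum_erase Finset.univ (f σ) (Finset.mem_univ (Fin.revPerm * σ))).symm
  rw [hsplit, add_sub_cancel_left]
  exact Ideal.sum_mem _ fun σ _ => Ideal.sum_mem _ fun τ hτ => hB σ τ hτ
end
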